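/- Let h be a positive integer, let φ(x_1,…,x_h) = c_1x_1 + ⋯ + c_hx_h be a linear form with integer coefficients satisfying condition N, and set C = Σ_{i=1}^h |c_i|. Let A be a finite φ-Sidon set of positive integers and let b be an integer with b > C · max(A). Then A ∪ {b} is a φ-Sidon set. -/

import Mathlib

/-- `A` is a Sidon set for the linear form `φ(x₁,…,x_h) = c₁x₁ + ⋯ + c_hx_h`
with integer coefficients `c`. -/
def IsSidon {h : ℕ} (c : Fin h → ℤ) (A : Set ℤ) : Prop :=
  ∀ a a' : Fin h → ℤ, (∀ i, a i ∈ A) → (∀ i, a' i ∈ A) →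
    (∑ i, c i * a i) = (∑ i, c i * a' i) → a = a'

/-- The linear form with coefficients `c` satisfies condition N. -/
def ConditionN {h : ℕ} (c : Fin h → ℤ) : Prop :=
  ¬ ∃ I₁ I₂ : Finset (Fin h), Disjoint I₁ I₂ ∧ (I₁.Nonempty ∨ I₂.Nonempty) ∧
      ∑ i ∈ I₁, c i = ∑ i ∈ I₂, c i

/-- Auxiliary bound: a partial sum `∑ cᵢ aᵢ` with `0 < aᵢ ≤ m` is at most
`(∑ max cᵢ 0) * m`. -/
lemma sum_mul_le_posPart_sum {h : ℕ} (c : Fin h → ℤ) (m : ℤ) (hm : 0 ≤ m)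
    (s : Finset (Fin h)) (f : Fin h → ℤ) (hf : ∀ i ∈ s, 0 < f i ∧ f i ≤ m) :
    ∑ i ∈ s, c i * f i ≤ (∑ i, max (c i) 0) * m := by
  rw [Finset.sum_mul]
  calc ∑ i ∈ s, c i * f i ≤ ∑ i ∈ s, max (c i) 0 * m := by
        apply Finset.sum_le_sum
        intro i hi
        rcases le_or_gt 0 (c i) with hc | hc
        · rw [max_eq_left hc]
          exact mul_le_mul_of_nonneg_left (hf i hi).2 hc
        · rw [max_eq_right hc.le, zero_mul]
          exact mul_nonpos_of_nonpos_of_nonneg hc.le (hf i hi).1.le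
    _ ≤ ∑ i, max (c i) 0 * m :=
        Finset.sum_le_sum_of_subset_of_nonneg (Finset.subset_univ s)
          (fun i _ _ => mul_nonneg (le_max_right _ _) hm)

/-- If `A` is a finite φ-Sidon set of positive integers and `b > C · max A`
with `C = Σ|cᵢ|`, then `A ∪ {b}` is a φ-Sidon set. -/
theorem statement12 {h : ℕ} (hh : 0 < h) (c : Fin h → ℤ) (hN : ConditionN c)
    (A : Finset ℤ) (hA : A.Nonempty) (hpos : ∀ a ∈ A, 0 < a)
    (hSidon : IsSidon c (A : Set ℤ))
    (b : ℤ) (hb : b > (∑ i, |c i|) * A.max' hA) :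
    IsSidon c (insert b (A : Set ℤ)) := by
  classical
  set m := A.max' hA with hm
  have hmA : m ∈ A := A.max'_mem hA
  have hm1 : 0 < m := hpos m hmA
  have hcne : ∀ i, c i ≠ 0 := by
    intro i hci
    exact hN ⟨{i}, ∅, by simp, Or.inl ⟨i, by simp⟩, by simp [hci]⟩
  have hC1 : (1 : ℤ) ≤ ∑ i, |c i| := by
    have i0 : Fin h := ⟨0, hh⟩
    calc (1 : ℤ) ≤ |c i0| := Int.one_le_abs (hcne i0)
      _ ≤ ∑ i, |c i| :=
          Finset.single_le_sum (fun i _ => abs_nonneg (c i)) (Finset.mem_univ i0)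
  have hb0 : 0 < b := lt_trans (mul_pos (lt_of_lt_of_le one_pos hC1) hm1) hb
  have habs : max (fun i => c i) 0 = max (fun i => c i) 0 := rfl
  -- pointwise: max c 0 + max (-c) 0 = |c|
  have hmaxabs : ∀ x : ℤ, max x 0 + max (-x) 0 = |x| := by
    intro x
    rcases le_or_gt 0 x with hx | hx
    · rw [max_eq_left hx, max_eq_right (neg_nonpos_of_nonneg hx), add_zero, abs_of_nonneg hx]
    · rw [max_eq_right hx.le, max_eq_left (neg_nonneg_of_nonpos hx.le), zero_add,
        abs_of_neg hx]
  have hsplitC : (∑ i, max (c i) 0) + (∑ i, max (-(c i)) 0) = ∑ i, |c i| := by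
    rw [← Finset.sum_add_distrib]
    exact Finset.sum_congr rfl fun i _ => hmaxabs (c i)
  intro a a' ha ha' hsum
  set I : Finset (Fin h) := Finset.univ.filter fun i => a i = b with hI
  set I' : Finset (Fin h) := Finset.univ.filter fun i => a' i = b with hI'
  have haA : ∀ i, a i ≠ b → a i ∈ A := by
    intro i hi
    rcases (Set.mem_insert_iff.mp (ha i)) with h1 | h1
    · exact absurd h1 hi
    · exact_mod_cast h1
  have ha'A : ∀ i, a' i ≠ b → a' i ∈ A := by
    intro i hi
    rcases (Set.mem_insert_iff.mp (ha' i)) with h1 | h1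
    · exact absurd h1 hi
    · exact_mod_cast h1
  have hbound : ∀ x ∈ A, 0 < x ∧ x ≤ m := fun x hx => ⟨hpos x hx, A.le_max' x hx⟩
  -- split the sums
  have hsplit : ∀ (f : Fin h → ℤ),
      ∑ i, c i * f i =
        (∑ i ∈ Finset.univ.filter fun i => f i = b, c i) * b +
        ∑ i ∈ Finset.univ.filter fun i => ¬ f i = b, c i * f i := by
    intro f
    rw [Finset.sum_mul]
    rw [← Finset.sum_filter_add_sum_filter_not Finset.univ (fun i => f i = b)
      (fun i => c i * f i)]
    congr 1
    exact Finset.sum_congr rfl fun i hi => by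
      rw [(Finset.mem_filter.mp hi).2]
  set S : ℤ := ∑ i ∈ I, c i with hS
  set S' : ℤ := ∑ i ∈ I', c i with hS'
  set T : ℤ := ∑ i ∈ Finset.univ.filter fun i => ¬ a i = b, c i * a i with hT
  set T' : ℤ := ∑ i ∈ Finset.univ.filter fun i => ¬ a' i = b, c i * a' i with hT'
  have heq : S * b + T = S' * b + T' := by
    rw [hS, hS', hT, hT', hI, hI', ← hsplit a, ← hsplit a', hsum]
  have hfA : ∀ i ∈ Finset.univ.filter fun i => ¬ a i = b, 0 < a i ∧ a i ≤ m := by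
    intro i hi
    exact hbound _ (haA i (Finset.mem_filter.mp hi).2)
  have hf'A : ∀ i ∈ Finset.univ.filter fun i => ¬ a' i = b, 0 < a' i ∧ a' i ≤ m := by
    intro i hi
    exact hbound _ (ha'A i (Finset.mem_filter.mp hi).2)
  have hTub : T ≤ (∑ i, max (c i) 0) * m :=
    sum_mul_le_posPart_sum c m hm1.le _ a hfA
  have hT'ub : T' ≤ (∑ i, max (c i) 0) * m :=
    sum_mul_le_posPart_sum c m hm1.le _ a' hf'A
  have hTlb : -T ≤ (∑ i, max (-(c i)) 0) * m := by
    have := sum_mul_le_posPart_sum (fun i => -(c i)) m hm1.le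
      (Finset.univ.filter fun i => ¬ a i = b) a hfA
    rw [hT]
    simpa [Finset.sum_neg_distrib, neg_mul] using this
  have hT'lb : -T' ≤ (∑ i, max (-(c i)) 0) * m := by
    have := sum_mul_le_posPart_sum (fun i => -(c i)) m hm1.le
      (Finset.univ.filter fun i => ¬ a' i = b) a' hf'A
    rw [hT']
    simpa [Finset.sum_neg_distrib, neg_mul] using this
  -- |T' - T| ≤ C m < b
  have hDub : T' - T ≤ (∑ i, |c i|) * m := by
    have : T' - T ≤ (∑ i, max (c i) 0) * m + (∑ i, max (-(c i)) 0) * m := by linarith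
    rw [← add_mul, hsplitC] at this
    exact this
  have hDlb : -((∑ i, |c i|) * m) ≤ T' - T := by
    have : T - T' ≤ (∑ i, max (c i) 0) * m + (∑ i, max (-(c i)) 0) * m := by linarith
    rw [← add_mul, hsplitC] at this
    linarith
  have hSS' : S = S' := by
    by_contra hne
    have h1 : 1 ≤ |S - S'| := Int.one_le_abs (sub_ne_zero.mpr hne)
    have h2 : (S - S') * b = T' - T := by linarith
    have h3 : |(S - S') * b| = |S - S'| * b := by
      rw [abs_mul, abs_of_pos hb0]
    have h4 : b ≤ |S - S'| * b := le_mul_of_one_le_left hb0.le h1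
    have h5 : |T' - T| ≤ (∑ i, |c i|) * m := abs_le.mpr ⟨hDlb, hDub⟩
    rw [h2] at h3
    linarith [le_of_eq h3.symm, h5, hb]
  -- condition N forces I = I'
  have hII' : I = I' := by
    have hd : Disjoint (I \ I') (I' \ I) := disjoint_sdiff_sdiff
    have hs1 : ∑ i ∈ I ∩ I', c i + ∑ i ∈ I \ I', c i = S := Finset.sum_inter_add_sum_sdiff I I' c
    have hs2 : ∑ i ∈ I' ∩ I, c i + ∑ i ∈ I' \ I, c i = S' := Finset.sum_inter_add_sum_sdiff I' I c
    have hcomm : I ∩ I' = I' ∩ I := Finset.inter_comm I I'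
    have hsum_eq : ∑ i ∈ I \ I', c i = ∑ i ∈ I' \ I, c i := by
      rw [hcomm] at hs1; linarith
    by_contra hne
    have hnonempty : (I \ I').Nonempty ∨ (I' \ I).Nonempty := by
      by_contra hcon
      push_neg at hcon
      rw [
        Finset.sdiff_eq_empty_iff_subset, Finset.sdiff_eq_empty_iff_subset] at hcon
      exact hne (le_antisymm hcon.1 hcon.2)
    exact hN ⟨I \ I', I' \ I, hd, hnonempty, hsum_eq⟩
  have hTT' : T = T' := by
    have : S * b = S' * b := by rw [hSS']
    linarith
  -- reduce to the Sidon property of A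
  set g : Fin h → ℤ := fun i => if a i = b then m else a i with hg
  set g' : Fin h → ℤ := fun i => if a' i = b then m else a' i with hg'
  have hgA : ∀ i, g i ∈ (A : Set ℤ) := by
    intro i
    rw [hg]
    by_cases hi : a i = b
    · simp [hi, hmA]
    · simpa [hi] using haA i hi
  have hg'A : ∀ i, g' i ∈ (A : Set ℤ) := by
    intro i
    rw [hg']
    by_cases hi : a' i = b
    · simp [hi, hmA]
    · simpa [hi] using ha'A i hi
  have hmem : ∀ i, (i ∈ I ↔ a i = b) ∧ (i ∈ I' ↔ a' i = b) := by
    intro i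
    constructor <;> simp [hI, hI']
  have hgsum : ∑ i, c i * g i = ∑ i, c i * g' i := by
    have e1 : ∑ i, c i * g i = S * m + T := by
      rw [← Finset.sum_filter_add_sum_filter_not Finset.univ (fun i => a i = b)
        (fun i => c i * g i), hS, hT, hI, Finset.sum_mul]
      congr 1
      · exact Finset.sum_congr rfl fun i hi => by
          rw [hg]; simp only [(Finset.mem_filter.mp hi).2, if_true]
      · exact Finset.sum_congr rfl fun i hi => by
          rw [hg]; simp only [(Finset.mem_filter.mp hi).2, if_false]
    have e2 : ∑ i, c i * g' i = S' * m + T' := by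
      rw [← Finset.sum_filter_add_sum_filter_not Finset.univ (fun i => a' i = b)
        (fun i => c i * g' i), hS', hT', hI', Finset.sum_mul]
      congr 1
      · exact Finset.sum_congr rfl fun i hi => by
          rw [hg']; simp only [(Finset.mem_filter.mp hi).2, if_true]
      · exact Finset.sum_congr rfl fun i hi => by
          rw [hg']; simp only [(Finset.mem_filter.mp hi).2, if_false]
    rw [e1, e2, hSS', hTT']
  have hgg' : g = g' := hSidon g g' hgA hg'A hgsum
  funext i
  by_cases hi : a i = b
  · have hiI : i ∈ I := by simp [hI, hi]
    have hiI' : i ∈ I' := hII' ▸ hiI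
    have : a' i = b := by simpa [hI'] using hiI'
    rw [hi, this]
  · have hiI : i ∉ I := by simp [hI, hi]
    have hiI' : i ∉ I' := hII' ▸ hiI
    have hi' : ¬ a' i = b := by simpa [hI'] using hiI'
    have := congrFun hgg' i
    rw [hg, hg'] at this
    simpa [hi, hi'] using this
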